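/- arXiv:1605.00381 — 7 statements merged into one kernel-verified Lean document; each statement's English description precedes it below -/
import Mathlib

section
/- The map σ'_X : 𝒫 X → [2^X, 2]_⋀ sending S to the function f ↦ ⋀_{x ∈ S} f(x) is a bijection between the powerset of X and the set of inf-preserving maps from the complete lattice (X → Prop) to Prop. -/
/-- The map `σ'_X : 𝒫 X → [2^X, 2]_⋀`, `S ↦ (f ↦ ∀ x ∈ S, f x)`, is a bijection
between the powerset of `X` and the inf-preserving maps `(X → Prop) → Prop`. -/
theorem stmt_3 {X : Type} :
    Set.BijOn (fun (S : Set X) => fun (f : X → Prop) => ∀ x ∈ S, f x)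
      Set.univ
      {φ : (X → Prop) → Prop | ∀ s : Set (X → Prop), φ (sInf s) = sInf (φ '' s)} := by
  classical
  refine ⟨?_, ?_, ?_⟩
  · intro S _ s
    simp only [Set.mem_setOf_eq]
    have h1 : sInf s = fun x => ∀ f ∈ s, f x := by
      funext x
      simp [sInf_apply, iInf_Prop_eq, Subtype.forall]
    rw [h1, sInf_Prop_eq]
    apply propext
    constructor
    · rintro h p ⟨f, hf, rfl⟩ x hx
      exact h x hx f hf
    · intro h x hx f hf
      exact h _ ⟨f, hf, rfl⟩ x hx
  · intro S _ T _ h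
    have key : ∀ (A B : Set X), ((fun f : X → Prop => ∀ x ∈ A, f x) =
        (fun f => ∀ x ∈ B, f x)) → B ⊆ A := by
      intro A B hAB x hx
      have := congrFun hAB (· ∈ A)
      simp only [eq_iff_iff] at this
      exact this.mp (fun _ h => h) x hx
    exact Set.Subset.antisymm (key T S h.symm) (key S T h)
  · intro φ hφ
    simp only [Set.mem_setOf_eq] at hφ
    refine ⟨{x | ¬ φ (fun y => y ≠ x)}, Set.mem_univ _, ?_⟩
    funext f
    have hf : f = sInf {g : X → Prop | ∃ x, ¬ f x ∧ g = (· ≠ x)} := by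
      funext y
      apply propext
      simp only [sInf_apply, iInf_Prop_eq, Subtype.forall, Set.mem_setOf_eq]
      constructor
      · rintro hy g ⟨x, hx, rfl⟩ rfl; exact hx hy
      · intro h
        by_contra hy
        exact h (· ≠ y) ⟨y, hy, rfl⟩ rfl
    apply propext
    constructor
    · intro h
      rw [hf, hφ, sInf_Prop_eq]
      rintro p ⟨g, ⟨x, hx, rfl⟩, rfl⟩
      by_contra hc
      exact hx (h x hc)
    · intro h x hx
      by_contra hfx
      rw [hf, hφ, sInf_Prop_eq] at h
      exact hx (h (φ (· ≠ x)) ⟨_, ⟨x, hfx, rfl⟩, rfl⟩)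
end

section
/- Let C be a complete category, T a monad on C, and A an object of C. There is a bijective correspondence between T-algebra structures α̂ : T A → A on A and monad morphisms α : T → K_A, where K_A is the continuation-like monad X ↦ A^{C(X,A)} (the C(X,A)-fold power of A). The correspondence sends α̂ to the map α_X whose f-component (for f : X → A) is α̂ ∘ T f, and conversely sends α to π_{id_A} ∘ α_A : T A → A. -/
open CategoryTheory CategoryTheory.Limits

universe v u

/-- The continuation-like monad object `K_A X = A^{C(X,A)}`. -/
noncomputable abbrev contPow {C : Type u} [Category.{v} C] [HasLimits C]
    (A X : C) : C :=
  ∏ᶜ (fun (_ : X ⟶ A) => A)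

/-- `ah : T A ⟶ A` is an Eilenberg–Moore algebra structure. -/
def IsAlgebraStructure {C : Type u} [Category.{v} C] (T : Monad C) {A : C}
    (ah : T.obj A ⟶ A) : Prop :=
  T.η.app A ≫ ah = 𝟙 A ∧ T.μ.app A ≫ ah = T.map ah ≫ ah

/-- A family `α X : T X ⟶ A^{C(X,A)}` is a monad morphism into the
continuation-like monad `K_A`, expressed componentwise via the projections:
naturality, unit compatibility, and multiplication compatibility
(`π_f ∘ μ^{K_A} = π_{π_f}`). -/
noncomputable def IsMonadMapToCont {C : Type u} [Category.{v} C] [HasLimits C]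
    (T : Monad C) (A : C) (α : ∀ X : C, T.obj X ⟶ contPow A X) : Prop :=
  (∀ (X Y : C) (g : X ⟶ Y) (f : Y ⟶ A),
      T.map g ≫ α Y ≫ Pi.π (fun (_ : Y ⟶ A) => A) f
        = α X ≫ Pi.π (fun (_ : X ⟶ A) => A) (g ≫ f))
  ∧ (∀ (X : C) (f : X ⟶ A),
      T.η.app X ≫ α X ≫ Pi.π (fun (_ : X ⟶ A) => A) f = f)
  ∧ (∀ (X : C) (f : X ⟶ A),
      T.μ.app X ≫ α X ≫ Pi.π (fun (_ : X ⟶ A) => A) f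
        = T.map (α X) ≫ α (contPow A X)
            ≫ Pi.π (fun (_ : contPow A X ⟶ A) => A)
                (Pi.π (fun (_ : X ⟶ A) => A) f))

/-- For a complete category `C`, a monad `T` on `C` and an object `A`, the
assignments `ah ↦ (X ↦ ⟨T f ≫ ah⟩_{f : X ⟶ A})` and
`α ↦ α_A ≫ π_{𝟙 A}` are mutually inverse bijections between `T`-algebra
structures on `A` and monad morphisms `T ⟶ K_A` into the continuation-like
monad `K_A X = A^{C(X,A)}`. -/
theorem stmt_5 {C : Type u} [Category.{v} C] [HasLimits C]
    (T : Monad C) (A : C) :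
    (∀ ah : T.obj A ⟶ A, IsAlgebraStructure T ah →
        IsMonadMapToCont T A
          (fun X => Pi.lift (fun (f : X ⟶ A) => T.map f ≫ ah)))
    ∧ (∀ α : ∀ X : C, T.obj X ⟶ contPow A X, IsMonadMapToCont T A α →
        IsAlgebraStructure T (α A ≫ Pi.π (fun (_ : A ⟶ A) => A) (𝟙 A)))
    ∧ (∀ ah : T.obj A ⟶ A, IsAlgebraStructure T ah →
        (fun X => Pi.lift (fun (f : X ⟶ A) => T.map f ≫ ah)) A
            ≫ Pi.π (fun (_ : A ⟶ A) => A) (𝟙 A) = ah)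
    ∧ (∀ α : ∀ X : C, T.obj X ⟶ contPow A X, IsMonadMapToCont T A α →
        ∀ X : C, α X = Pi.lift (fun (f : X ⟶ A) =>
          T.map f ≫ α A ≫ Pi.π (fun (_ : A ⟶ A) => A) (𝟙 A))) := by
  refine ⟨?_, ?_, ?_, ?_⟩
  · intro ah ⟨h1, h2⟩
    refine ⟨?_, ?_, ?_⟩
    · intro X Y g f
      simp only [limit.lift_π, Fan.mk_pt, Fan.mk_π_app, Functor.map_comp,
        Category.assoc]
    · intro X f
      have := T.η.naturality f
      simp only [limit.lift_π, Fan.mk_pt, Fan.mk_π_app]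
      rw [← Category.assoc, ← this]
      simp [h1]
    · intro X f
      have := T.μ.naturality f
      simp only [limit.lift_π, Fan.mk_pt, Fan.mk_π_app, ← Functor.map_comp_assoc]
      rw [← Category.assoc, ← this, Category.assoc, h2, Functor.comp_map,
        ← Functor.map_comp_assoc]
  · intro α ⟨hnat, hη, hμ⟩
    constructor
    · rw [hη A (𝟙 A)]
    · rw [hμ A (𝟙 A)]
      have := hnat (contPow A A) A (Pi.π (fun (_ : A ⟶ A) => A) (𝟙 A)) (𝟙 A)
      rw [Category.comp_id] at this
      rw [Functor.map_comp, Category.assoc, this]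
  · intro ah _
    simp
  · intro α ⟨hnat, hη, hμ⟩ X
    apply Pi.hom_ext
    intro f
    have := hnat X A f (𝟙 A)
    rw [Category.comp_id] at this
    simp only [limit.lift_π, Fan.mk_pt, Fan.mk_π_app]
    rw [← this]
end

section
/- Let 𝒟 be the finitely supported probability subdistribution monad on Set (D_{≤1} X = finitely supported p : X → [0,1] with ∑ p(x) ≤ 1). The map τ_total sending p ∈ D_{≤1} X to the function (f : X → [0,1]) ↦ ∑_{x} f(x)·p(x) is injective for every set X, and for every finite set Y it is a bijection from D_{≤1} Y onto the set of maps [0,1]^Y → [0,1] that preserve 0, partial sums (f ⊎ g defined when f + g ≤ 1 pointwise, with value f+g), and scalar multiplication by elements of [0,1]. -/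
open Set
lemma aux_finsum_delta {X : Type} [DecidableEq X] (p : X → ℝ) (x : X) :
    ∑ᶠ x', (if x' = x then (1:ℝ) else 0) * p x' = p x := by
  classical
  rw [finsum_eq_single _ x]
  · simp
  · intro x' hx'; simp [hx']

lemma aux_key {Y : Type} [Fintype Y] [DecidableEq Y] (φ : (Y → ℝ) → ℝ)
    (hz : φ 0 = 0)
    (hadd : ∀ f g : Y → ℝ, (∀ y, f y ∈ Icc (0:ℝ) 1) → (∀ y, g y ∈ Icc (0:ℝ) 1) →
        (∀ y, f y + g y ≤ 1) → φ (f + g) = φ f + φ g)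
    (hsc : ∀ (r : ℝ) (f : Y → ℝ), r ∈ Icc (0:ℝ) 1 → (∀ y, f y ∈ Icc (0:ℝ) 1) →
        φ (r • f) = r * φ f)
    (f : Y → ℝ) (hf : ∀ y, f y ∈ Icc (0:ℝ) 1) (s : Finset Y) :
    φ (fun x => if x ∈ s then f x else 0) =
      ∑ y ∈ s, f y * φ (fun x => if x = y then (1:ℝ) else 0) := by
  classical
  induction s using Finset.induction with
  | empty => simpa using (show φ (fun _ => 0) = 0 from hz)
  | @insert a s ha ih =>
    have hδ : ∀ a : Y, ∀ y, (if y = a then (1:ℝ) else 0) ∈ Icc (0:ℝ) 1 := by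
      intro a y; by_cases h : y = a <;> simp [h]
    have hsplit : (fun x => if x ∈ insert a s then f x else 0) =
        ((f a) • (fun x => if x = a then (1:ℝ) else 0)) +
          (fun x => if x ∈ s then f x else 0) := by
      funext x
      by_cases hx : x = a
      · subst hx; simp [ha]
      · by_cases hxs : x ∈ s <;> simp [hx, hxs]
    have hmem1 : ∀ y, ((f a) • (fun x => if x = a then (1:ℝ) else 0)) y ∈ Icc (0:ℝ) 1 := by
      intro y; by_cases h : y = a <;>
        simp [h, (hf a).1, (hf a).2, Pi.smul_apply]
    have hmem2 : ∀ y, (fun x => if x ∈ s then f x else 0) y ∈ Icc (0:ℝ) 1 := by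
      intro y; by_cases h : y ∈ s <;> simp [h, (hf y).1, (hf y).2]
    have hle : ∀ y, ((f a) • (fun x => if x = a then (1:ℝ) else 0)) y +
        (fun x => if x ∈ s then f x else 0) y ≤ 1 := by
      intro y
      by_cases h : y = a
      · subst h; simp [ha, (hf y).2]
      · by_cases hs' : y ∈ s <;> simp [h, hs', (hf y).2, (hf y).1]
    rw [hsplit, hadd _ _ hmem1 hmem2 hle, hsc (f a) _ ⟨(hf a).1, (hf a).2⟩ (hδ a), ih,
      Finset.sum_insert ha]


/-- The total modality `τ_total(p)(f) = ∑_x f(x)·p(x)` for the finitely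
supported subdistribution monad: it is injective on subdistributions over any
set `X`, and for a finite set `Y` it is a bijection from subdistributions on
`Y` onto the maps `[0,1]^Y → [0,1]` preserving `0`, partial sums and scalar
multiplication (generalized-effect-module morphisms). -/
theorem stmt_12 :
    -- injectivity for arbitrary X
    (∀ (X : Type) (p q : X → ℝ),
      (∀ x, p x ∈ Icc (0:ℝ) 1) → (Function.support p).Finite → (∑ᶠ x, p x ≤ 1) →
      (∀ x, q x ∈ Icc (0:ℝ) 1) → (Function.support q).Finite → (∑ᶠ x, q x ≤ 1) →
      (∀ f : X → ℝ, (∀ x, f x ∈ Icc (0:ℝ) 1) →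
          ∑ᶠ x, f x * p x = ∑ᶠ x, f x * q x) →
      p = q)
    -- for finite Y : τ_total p is a generalized-effect-module morphism
    ∧ (∀ (Y : Type) [Fintype Y] (p : Y → ℝ),
        (∀ y, p y ∈ Icc (0:ℝ) 1) → (∑ y, p y ≤ 1) →
        ((∀ f : Y → ℝ, (∀ y, f y ∈ Icc (0:ℝ) 1) → (∑ y, f y * p y) ∈ Icc (0:ℝ) 1)
          ∧ (∑ y, (0:ℝ) * p y) = 0
          ∧ (∀ f g : Y → ℝ, (∀ y, f y ∈ Icc (0:ℝ) 1) → (∀ y, g y ∈ Icc (0:ℝ) 1) →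
              (∀ y, f y + g y ≤ 1) →
              ∑ y, (f y + g y) * p y = (∑ y, f y * p y) + ∑ y, g y * p y)
          ∧ (∀ (r : ℝ) (f : Y → ℝ), r ∈ Icc (0:ℝ) 1 → (∀ y, f y ∈ Icc (0:ℝ) 1) →
              ∑ y, (r * f y) * p y = r * ∑ y, f y * p y)))
    -- and every generalized-effect-module morphism φ : [0,1]^Y → [0,1]
    -- arises from a unique subdistribution p
    ∧ (∀ (Y : Type) [Fintype Y] (φ : (Y → ℝ) → ℝ),
        (∀ f : Y → ℝ, (∀ y, f y ∈ Icc (0:ℝ) 1) → φ f ∈ Icc (0:ℝ) 1) →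
        φ 0 = 0 →
        (∀ f g : Y → ℝ, (∀ y, f y ∈ Icc (0:ℝ) 1) → (∀ y, g y ∈ Icc (0:ℝ) 1) →
            (∀ y, f y + g y ≤ 1) → φ (f + g) = φ f + φ g) →
        (∀ (r : ℝ) (f : Y → ℝ), r ∈ Icc (0:ℝ) 1 → (∀ y, f y ∈ Icc (0:ℝ) 1) →
            φ (r • f) = r * φ f) →
        ∃! p : Y → ℝ,
          (∀ y, p y ∈ Icc (0:ℝ) 1) ∧ (∑ y, p y ≤ 1) ∧
          ∀ f : Y → ℝ, (∀ y, f y ∈ Icc (0:ℝ) 1) → φ f = ∑ y, f y * p y) := by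
  classical
  refine ⟨?_, ?_, ?_⟩
  · -- injectivity
    intro X p q hp _ _ hq _ _ heq
    funext x
    have h := heq (fun x' => if x' = x then 1 else 0)
      (by intro x'; by_cases h : x' = x <;> simp [h])
    rwa [aux_finsum_delta p x, aux_finsum_delta q x] at h
  · -- morphism properties
    intro Y _ p hp hps
    refine ⟨?_, by simp, ?_, ?_⟩
    · intro f hf
      constructor
      · exact Finset.sum_nonneg fun y _ => mul_nonneg (hf y).1 (hp y).1
      · calc ∑ y, f y * p y ≤ ∑ y, p y :=
              Finset.sum_le_sum fun y _ => by
                nlinarith [(hf y).1, (hf y).2, (hp y).1]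
          _ ≤ 1 := hps
    · intro f g _ _ _
      simp [add_mul, Finset.sum_add_distrib]
    · intro r f _ _
      rw [Finset.mul_sum]; congr 1; funext y; ring
  · -- bijectivity onto morphisms
    intro Y _ φ hmem hz hadd hsc
    set p : Y → ℝ := fun y => φ (fun x => if x = y then 1 else 0) with hpdef
    have hδmem : ∀ y : Y, ∀ x, (if x = y then (1:ℝ) else 0) ∈ Icc (0:ℝ) 1 := by
      intro y x; by_cases h : x = y <;> simp [h]
    have hrep : ∀ f : Y → ℝ, (∀ y, f y ∈ Icc (0:ℝ) 1) → φ f = ∑ y, f y * p y := by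
      intro f hf
      have := aux_key φ hz hadd hsc f hf Finset.univ
      simpa using this
    refine ⟨p, ⟨fun y => hmem _ (hδmem y), ?_, hrep⟩, ?_⟩
    · have h1 : φ (fun _ => (1:ℝ)) = ∑ y, 1 * p y := by
        have := hrep (fun _ => 1) (by intro y; simp)
        simpa using this
      have h2 := (hmem (fun _ => 1) (by intro y; simp)).2
      calc ∑ y, p y = φ (fun _ => (1:ℝ)) := by rw [h1]; simp
        _ ≤ 1 := h2
    · intro q ⟨hq1, _, hq3⟩
      funext y
      have := hq3 (fun x => if x = y then 1 else 0) (hδmem y)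
      rw [hpdef]
      simp only [this]
      simp
end

section
/- Let X be a finite set and φ : ([0,1]^X) → [0,1] a map preserving 0, partial sums, and scalar multiplication (a generalized effect module morphism, where f ⊎ g is defined iff f+g ≤ 1 pointwise). Then there exists a unique finitely supported subdistribution p on X (∑ p(x) ≤ 1) such that φ(f) = ∑_x f(x) p(x) for all f : X → [0,1]. -/
open Set

/-- Healthiness for the subdistribution monad on a finite set `X` with the
total modality: every map `φ : [0,1]^X → [0,1]` preserving `0`, partial sums
and scalar multiplication is of the form `f ↦ ∑_x f(x)·p(x)` for a unique
subdistribution `p` on `X`. -/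
theorem stmt_13 (X : Type) [Fintype X] (φ : (X → ℝ) → ℝ)
    (hmaps : ∀ f : X → ℝ, (∀ x, f x ∈ Icc (0:ℝ) 1) → φ f ∈ Icc (0:ℝ) 1)
    (hzero : φ 0 = 0)
    (hadd : ∀ f g : X → ℝ, (∀ x, f x ∈ Icc (0:ℝ) 1) → (∀ x, g x ∈ Icc (0:ℝ) 1) →
        (∀ x, f x + g x ≤ 1) → φ (f + g) = φ f + φ g)
    (hsmul : ∀ (r : ℝ) (f : X → ℝ), r ∈ Icc (0:ℝ) 1 →
        (∀ x, f x ∈ Icc (0:ℝ) 1) → φ (r • f) = r * φ f) :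
    ∃! p : X → ℝ,
      (∀ x, p x ∈ Icc (0:ℝ) 1) ∧ (∑ x, p x ≤ 1) ∧
      ∀ f : X → ℝ, (∀ x, f x ∈ Icc (0:ℝ) 1) → φ f = ∑ x, f x * p x := by
  classical
  set δ : X → X → ℝ := fun x y => if y = x then 1 else 0 with hδ
  have hδmem : ∀ x, ∀ y, δ x y ∈ Icc (0:ℝ) 1 := by
    intro x y; simp only [hδ]; split <;> simp
  set p : X → ℝ := fun x => φ (δ x) with hp
  have hpmem : ∀ x, p x ∈ Icc (0:ℝ) 1 := fun x => hmaps _ (hδmem x)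
  -- key lemma
  have key : ∀ (s : Finset X) (f : X → ℝ), (∀ x, f x ∈ Icc (0:ℝ) 1) →
      φ (fun y => if y ∈ s then f y else 0) = ∑ x ∈ s, f x * p x := by
    intro s
    induction s using Finset.induction_on with
    | empty =>
      intro f hf
      have : (fun y => if y ∈ (∅ : Finset X) then f y else 0) = (0 : X → ℝ) := by
        funext y; simp
      rw [this, hzero, Finset.sum_empty]
    | @insert a s ha ih =>
      intro f hf
      have hg1 : ∀ y, (f a • δ a) y ∈ Icc (0:ℝ) 1 := by
        intro y
        simp only [Pi.smul_apply, smul_eq_mul, hδ]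
        split
        · simpa using hf a
        · simp
      have hg2 : ∀ y, (fun y => if y ∈ s then f y else 0) y ∈ Icc (0:ℝ) 1 := by
        intro y; dsimp only; split
        · exact hf y
        · simp
      have hsumle : ∀ y, (f a • δ a) y + (fun y => if y ∈ s then f y else 0) y ≤ 1 := by
        intro y
        simp only [Pi.smul_apply, smul_eq_mul, hδ]
        by_cases hy : y = a
        · subst hy
          simpa [ha] using (hf _).2
        · simp only [if_neg hy, mul_zero, zero_add]
          split
          · exact (hf y).2
          · norm_num
      have heq : (fun y => if y ∈ insert a s then f y else 0)
          = (f a • δ a) + (fun y => if y ∈ s then f y else 0) := by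
        funext y
        simp only [Pi.add_apply, Pi.smul_apply, smul_eq_mul, hδ, Finset.mem_insert]
        by_cases hy : y = a
        · subst hy; simp [ha]
        · simp [hy]
      rw [heq, hadd _ _ hg1 hg2 hsumle, hsmul (f a) (δ a) (hf a) (hδmem a),
        ih f hf, Finset.sum_insert ha]
  have hrepr : ∀ f : X → ℝ, (∀ x, f x ∈ Icc (0:ℝ) 1) → φ f = ∑ x, f x * p x := by
    intro f hf
    have := key Finset.univ f hf
    simpa using this
  refine ⟨p, ⟨hpmem, ?_, hrepr⟩, ?_⟩
  · have h1 : φ (fun _ => (1:ℝ)) = ∑ x, 1 * p x := hrepr _ (by intro x; simp)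
    have h2 := (hmaps (fun _ => (1:ℝ)) (by intro x; simp)).2
    rw [h1] at h2
    simpa using h2
  · rintro q ⟨hq1, hq2, hq3⟩
    funext x
    have := hq3 (δ x) (hδmem x)
    have hsum : ∑ y, δ x y * q y = q x := by
      rw [Finset.sum_eq_single x]
      · simp [hδ]
      · intro b _ hb; simp [hδ, hb]
      · intro h; exact absurd (Finset.mem_univ x) h
    rw [hsum] at this
    rw [← this, hp]
end

section
/- Let Y be a finite set. A map φ : ([0,1]^Y) → [0,1] is of the form f ↦ ∑_y f(y) p(y) for some probability distribution p on Y (∑ p(y) = 1) if and only if φ preserves 0, 1 (the constant-one function maps to 1), partial sums, and scalar multiplication by elements of [0,1]. -/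
open Set

/-- Healthiness for the distribution monad on a finite set `Y`: a map
`φ : [0,1]^Y → [0,1]` is of the form `f ↦ ∑_y f(y)·p(y)` for some probability
distribution `p` on `Y` iff `φ` maps into `[0,1]` and preserves `0`, `1`,
partial sums and scalar multiplication by elements of `[0,1]`. -/
theorem stmt_14 (Y : Type) [Fintype Y] (φ : (Y → ℝ) → ℝ) :
    (∃ p : Y → ℝ, (∀ y, p y ∈ Icc (0:ℝ) 1) ∧ (∑ y, p y = 1) ∧
        ∀ f : Y → ℝ, (∀ y, f y ∈ Icc (0:ℝ) 1) → φ f = ∑ y, f y * p y)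
    ↔ ((∀ f : Y → ℝ, (∀ y, f y ∈ Icc (0:ℝ) 1) → φ f ∈ Icc (0:ℝ) 1)
      ∧ φ 0 = 0
      ∧ φ 1 = 1
      ∧ (∀ f g : Y → ℝ, (∀ y, f y ∈ Icc (0:ℝ) 1) → (∀ y, g y ∈ Icc (0:ℝ) 1) →
          (∀ y, f y + g y ≤ 1) → φ (f + g) = φ f + φ g)
      ∧ (∀ (r : ℝ) (f : Y → ℝ), r ∈ Icc (0:ℝ) 1 →
          (∀ y, f y ∈ Icc (0:ℝ) 1) → φ (r • f) = r * φ f)) := by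
  classical
  constructor
  · rintro ⟨p, hp, hsum, hφ⟩
    have h0 : (0:ℝ) ∈ Icc (0:ℝ) 1 := ⟨le_refl 0, zero_le_one⟩
    refine ⟨?_, ?_, ?_, ?_, ?_⟩
    · intro f hf
      rw [hφ f hf]
      constructor
      · exact Finset.sum_nonneg fun y _ => mul_nonneg (hf y).1 (hp y).1
      · calc ∑ y, f y * p y ≤ ∑ y, p y := by
              refine Finset.sum_le_sum fun y _ => ?_
              calc f y * p y ≤ 1 * p y := mul_le_mul_of_nonneg_right (hf y).2 (hp y).1
                _ = p y := one_mul _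
          _ = 1 := hsum
    · rw [hφ 0 (fun _ => h0)]
      simp
    · rw [hφ 1 (fun _ => ⟨zero_le_one, le_refl 1⟩)]
      simp [hsum]
    · intro f g hf hg hfg
      rw [hφ f hf, hφ g hg, hφ (f + g) (fun y => ⟨add_nonneg (hf y).1 (hg y).1, hfg y⟩)]
      rw [← Finset.sum_add_distrib]
      refine Finset.sum_congr rfl fun y _ => ?_
      simp [add_mul]
    · intro r f hr hf
      rw [hφ f hf, hφ (r • f) (fun y => ⟨mul_nonneg hr.1 (hf y).1,
          by calc r * f y ≤ 1 * 1 := mul_le_mul hr.2 (hf y).2 (hf y).1 zero_le_one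
             _ = 1 := one_mul 1⟩)]
      rw [Finset.mul_sum]
      refine Finset.sum_congr rfl fun y _ => ?_
      simp [mul_assoc, mul_comm, mul_left_comm]
  · rintro ⟨hIcc, h0, h1, hadd, hsmul⟩
    -- indicator functions
    set e : Y → (Y → ℝ) := fun y z => if z = y then 1 else 0 with he
    have he01 : ∀ y z, e y z ∈ Icc (0:ℝ) 1 := by
      intro y z; simp only [he]; split <;> simp
    -- φ is additive on sums of families whose total sum is in [0,1]
    have key : ∀ (s : Finset Y) (g : Y → (Y → ℝ)),
        (∀ y z, g y z ∈ Icc (0:ℝ) 1) → (∀ z, ∑ y ∈ s, g y z ≤ 1) →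
        φ (∑ y ∈ s, g y) = ∑ y ∈ s, φ (g y) := by
      intro s
      induction s using Finset.induction_on with
      | empty => intro g _ _; simpa using h0
      | insert _ _ hx ih =>
        rename_i a s
        intro g hg hsle
        rw [Finset.sum_insert hx, Finset.sum_insert hx]
        have hsin : ∀ z, (∑ y ∈ s, g y z) ∈ Icc (0:ℝ) 1 := by
          intro z
          constructor
          · exact Finset.sum_nonneg fun y _ => (hg y z).1
          · have := hsle z
            rw [Finset.sum_insert hx] at this
            have hga := (hg a z).1
            linarith
        have hsfun : (∑ y ∈ s, g y) = fun z => ∑ y ∈ s, g y z := by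
          funext z; simp
        have hrec : φ (∑ y ∈ s, g y) = ∑ y ∈ s, φ (g y) := by
          apply ih g hg
          intro z
          exact (hsin z).2
        rw [hadd (g a) (∑ y ∈ s, g y) (hg a) (by rw [hsfun]; exact hsin)
          (by intro z
              have := hsle z
              rw [Finset.sum_insert hx] at this
              simpa [hsfun] using this), hrec]
    refine ⟨fun y => φ (e y), fun y => hIcc (e y) (he01 y), ?_, ?_⟩
    · have hsum1 : (∑ y, e y) = (1 : Y → ℝ) := by
        funext z; simp [he, Finset.sum_ite_eq]
      have := key Finset.univ e he01 (by intro z; rw [show (∑ y, e y z) = (∑ y, e y) z from by simp, hsum1]; norm_num)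
      rw [hsum1, h1] at this
      exact this.symm
    · intro f hf
      have hfe : (∑ y, f y • e y) = f := by
        funext z
        simp [he, Finset.sum_ite_eq, mul_comm]
      have hg01 : ∀ y z, (f y • e y) z ∈ Icc (0:ℝ) 1 := by
        intro y z
        simp only [Pi.smul_apply, smul_eq_mul, he]
        split
        · simpa using ⟨(hf y).1, (hf y).2⟩
        · simp
      have hle : ∀ z, ∑ y, (f y • e y) z ≤ 1 := by
        intro z
        have : (∑ y, (f y • e y) z) = (∑ y, f y • e y) z := by simp
        rw [this, hfe]
        exact (hf z).2
      have := key Finset.univ (fun y => f y • e y) hg01 hle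
      rw [hfe] at this
      rw [this]
      refine Finset.sum_congr rfl fun y _ => ?_
      exact hsmul (f y) (e y) (hf y) (he01 y)
end

section
/- For a complete category C with a dualizing-object dual adjunction to D^op and a monad map τ : T → D(Ω^(−), Ω), if τ is a natural isomorphism then the induced predicate-transformer functor P^τ : Kℓ(T) → D^op is full and faithful. In the concrete instance T = 𝒫 (powerset monad on Set) and D = complete join-semilattices with Ω = Prop: the functor Kℓ(𝒫) → (CL_⋁)^op sending X to the complete lattice X → Prop and f : X → 𝒫 Y to the sup-preserving map h ↦ λx. ∃ y ∈ f x, h y is full and faithful. -/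
/-- Healthiness as full-and-faithfulness, concrete instance: the functor
`Kℓ(𝒫) → (CL_⋁)^op` sending `X` to the complete lattice `X → Prop` and a
Kleisli morphism `f : X → 𝒫 Y` to the predicate transformer
`h ↦ λ x, ∃ y ∈ f x, h y` is full and faithful, i.e. for all sets `X`, `Y`
the map `(X → 𝒫 Y) → SupHom((Y → Prop),(X → Prop))` is a bijection onto the
sup-preserving maps. -/
theorem stmt_15 (X Y : Type) :
    Set.BijOn
      (fun (f : X → Set Y) => fun (h : Y → Prop) (x : X) => ∃ y ∈ f x, h y)
      Set.univ
      {φ : (Y → Prop) → (X → Prop) |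
        ∀ s : Set (Y → Prop), φ (sSup s) = sSup (φ '' s)} := by
  refine ⟨fun f _ => ?_, fun f _ g _ hfg => ?_, fun φ hφ => ?_⟩
  · intro s
    funext x
    simp only [sSup_apply, iSup_Prop_eq, Set.mem_image, Subtype.exists, exists_prop, eq_iff_iff]
    aesop
  · funext x
    ext y
    have := congrFun (congrFun hfg (fun y' => y' = y)) x
    simp only at this
    constructor
    · intro hy
      obtain ⟨y', hy', rfl⟩ := this.mp ⟨y, hy, rfl⟩
      exact hy'
    · intro hy
      obtain ⟨y', hy', rfl⟩ := this.mpr ⟨y, hy, rfl⟩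
      exact hy'
  · refine ⟨fun x => {y | φ (fun y' => y' = y) x}, Set.mem_univ _, ?_⟩
    funext h
    have key : h = sSup {p : Y → Prop | ∃ y, h y ∧ p = fun y' => y' = y} := by
      funext z
      simp only [sSup_apply, iSup_Prop_eq, Subtype.exists, exists_prop, eq_iff_iff]
      constructor
      · intro hz
        exact ⟨fun y' => y' = z, ⟨z, hz, rfl⟩, rfl⟩
      · rintro ⟨a, ⟨y, hy, rfl⟩, rfl⟩
        exact hy
    conv_rhs => rw [key, hφ]
    funext x
    simp only [sSup_apply, iSup_Prop_eq, Set.mem_image, Set.mem_setOf_eq, Subtype.exists, exists_prop, eq_iff_iff]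
    constructor
    · rintro ⟨y, hy, hyh⟩
      exact ⟨φ (fun y' => y' = y), ⟨_, ⟨y, hyh, rfl⟩, rfl⟩, hy⟩
    · rintro ⟨a, ⟨p, ⟨y, hy, rfl⟩, rfl⟩, hax⟩
      exact ⟨y, hax, hy⟩
end

section
/- Let ℒ be the lift (maybe) monad on Set and consider computations f : X → 𝒫₊(Y + 1) where 𝒫₊ denotes nonempty powersets. Define wp(f) : Set Y → Set X by wp(f)(V) = {x | f(x) ⊆ {inl y | y ∈ V}} (every outcome is a non-diverging element of V). Then a function φ : Set Y → Set X arises as wp(f) for some f : X → 𝒫₊(Y+1) if and only if φ(∅) = ∅ and φ preserves all nonempty intersections. -/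
/-- Dijkstra's healthiness for nondeterminism with divergence: a predicate
transformer `φ : Set Y → Set X` arises as
`wp(f)(V) = {x | f x ⊆ {inl y | y ∈ V}}` for some computation
`f : X → 𝒫₊(Y + 1)` (nonempty powersets of `Y` plus a divergence element)
iff `φ ∅ = ∅` (strictness) and `φ` preserves all nonempty intersections
(positive conjunctivity). -/
theorem stmt_17 (X Y : Type) (φ : Set Y → Set X) :
    (∃ f : X → {S : Set (Y ⊕ PUnit) // S.Nonempty},
        φ = fun V => {x | (f x).1 ⊆ Sum.inl '' V})
    ↔ (φ ∅ = ∅ ∧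
       ∀ s : Set (Set Y), s.Nonempty → φ (⋂₀ s) = ⋂ V ∈ s, φ V) := by
  constructor
  · rintro ⟨f, rfl⟩
    constructor
    · ext x
      simp only [Set.mem_setOf_eq, Set.image_empty, Set.subset_empty_iff,
        Set.mem_empty_iff_false, iff_false]
      exact fun h => (f x).2.ne_empty h
    · intro s ⟨V₀, hV₀⟩
      ext x
      simp only [Set.mem_setOf_eq, Set.mem_iInter]
      constructor
      · intro h V hV
        exact h.trans (Set.image_mono (Set.sInter_subset_of_mem hV))
      · intro h z hz
        obtain ⟨y, hy, hyz⟩ := h V₀ hV₀ hz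
        refine ⟨y, fun V hV => ?_, hyz⟩
        obtain ⟨y', hy', hyz'⟩ := h V hV hz
        rwa [show y' = y from Sum.inl.inj (hyz'.trans hyz.symm)] at hy'
  · rintro ⟨hstrict, hconj⟩
    -- monotonicity
    have hmono : ∀ A B : Set Y, A ⊆ B → φ A ⊆ φ B := by
      intro A B hAB
      have := hconj {A, B} ⟨A, by simp⟩
      rw [Set.sInter_pair, Set.inter_eq_left.mpr hAB] at this
      rw [this]
      intro x hx
      simp only [Set.mem_iInter] at hx
      exact hx B (by simp)
    classical
    refine ⟨fun x =>
      if h : ∃ V, x ∈ φ V then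
        ⟨Sum.inl '' ⋂₀ {V | x ∈ φ V}, ?_⟩
      else ⟨{Sum.inr PUnit.unit}, ⟨_, rfl⟩⟩, ?_⟩
    · -- nonempty: x ∈ φ (⋂₀ ...) and φ ∅ = ∅
      have hx : x ∈ φ (⋂₀ {V | x ∈ φ V}) := by
        have := hconj {V | x ∈ φ V} h
        rw [this]
        simp only [Set.mem_iInter]
        exact fun V hV => hV
      rcases Set.eq_empty_or_nonempty (⋂₀ {V | x ∈ φ V}) with he | hne
      · rw [he, hstrict] at hx; exact absurd hx (Set.notMem_empty x)
      · exact hne.image _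
    · ext V x
      simp only [Set.mem_setOf_eq]
      by_cases h : ∃ W, x ∈ φ W
      · simp only [dif_pos h]
        rw [Set.image_subset_image_iff Sum.inl_injective]
        constructor
        · intro hx
          exact Set.sInter_subset_of_mem hx
        · intro hx
          have hx' : x ∈ φ (⋂₀ {W | x ∈ φ W}) := by
            have := hconj {W | x ∈ φ W} h
            rw [this]
            simp only [Set.mem_iInter]
            exact fun W hW => hW
          exact hmono _ _ hx hx'
      · simp only [dif_neg h]
        constructor
        · exact fun hx => absurd hx (h ⟨V, ·⟩)
        · intro hsub
          obtain ⟨y, _, hy⟩ := hsub rfl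
          exact absurd hy (by simp)
end
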